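/- Define σ(x) = (1 − 2x − √((6x+1)(1−2x)))/4 for x ∈ (−1/6, 1/3). Then σ is an involution on (−1/6, 1/3) with σ(0) = 0, and A(σ(x)) = A(x) for all x in this interval, where A(x) = x²/2 − x³. -/
import Mathlib


theorem sigma_involution :
    (∀ x ∈ Set.Ioo (-(1:ℝ)/6) (1/3),
      (1 - 2 * x - Real.sqrt ((6 * x + 1) * (1 - 2 * x))) / 4 ∈ Set.Ioo (-(1:ℝ)/6) (1/3)) ∧
    ((1 - 2 * (0:ℝ) - Real.sqrt ((6 * 0 + 1) * (1 - 2 * 0))) / 4 = 0) ∧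
    (∀ x ∈ Set.Ioo (-(1:ℝ)/6) (1/3),
      (1 - 2 * ((1 - 2 * x - Real.sqrt ((6 * x + 1) * (1 - 2 * x))) / 4) -
        Real.sqrt ((6 * ((1 - 2 * x - Real.sqrt ((6 * x + 1) * (1 - 2 * x))) / 4) + 1) *
          (1 - 2 * ((1 - 2 * x - Real.sqrt ((6 * x + 1) * (1 - 2 * x))) / 4)))) / 4 = x) ∧
    (∀ x ∈ Set.Ioo (-(1:ℝ)/6) (1/3),
      ((1 - 2 * x - Real.sqrt ((6 * x + 1) * (1 - 2 * x))) / 4) ^ 2 / 2 -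
        ((1 - 2 * x - Real.sqrt ((6 * x + 1) * (1 - 2 * x))) / 4) ^ 3 =
      x ^ 2 / 2 - x ^ 3) := by
  have key : ∀ x ∈ Set.Ioo (-(1:ℝ)/6) (1/3),
      0 ≤ Real.sqrt ((6 * x + 1) * (1 - 2 * x)) ∧
      (Real.sqrt ((6 * x + 1) * (1 - 2 * x)))^2 = (6 * x + 1) * (1 - 2 * x) := by
    intro x hx
    obtain ⟨h1, h2⟩ := hx
    refine ⟨Real.sqrt_nonneg _, Real.sq_sqrt ?_⟩
    have : (0:ℝ) ≤ 6 * x + 1 := by linarith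
    have : (0:ℝ) ≤ 1 - 2 * x := by linarith
    positivity
  refine ⟨?_, ?_, ?_, ?_⟩
  · intro x hx
    obtain ⟨hs0, hs2⟩ := key x hx
    obtain ⟨h1, h2⟩ := hx
    set s := Real.sqrt ((6 * x + 1) * (1 - 2 * x)) with hs
    constructor
    · have hpos : (0:ℝ) < (1/3 - x) * (1/3 - x) :=
        mul_pos (by linarith) (by linarith)
      nlinarith [hs0, hs2, hpos]
    · nlinarith [hs0]
  · norm_num
  · intro x hx
    obtain ⟨hs0, hs2⟩ := key x hx
    obtain ⟨h1, h2⟩ := hx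
    set s := Real.sqrt ((6 * x + 1) * (1 - 2 * x)) with hs
    have hsge : 6 * x - 1 ≤ s := by
      rcases le_or_gt x 0 with h | h
      · linarith
      · nlinarith [hs0, hs2, mul_pos h (by linarith : (0:ℝ) < 1 - 3 * x)]
    have harg : (6 * ((1 - 2 * x - s) / 4) + 1) * (1 - 2 * ((1 - 2 * x - s) / 4))
        = ((1 - 6 * x + s) / 2)^2 := by linear_combination (-1 : ℝ) * hs2
    rw [harg, Real.sqrt_sq (by linarith : (0:ℝ) ≤ (1 - 6 * x + s) / 2)]
    ring
  · intro x hx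
    obtain ⟨hs0, hs2⟩ := key x hx
    set s := Real.sqrt ((6 * x + 1) * (1 - 2 * x)) with hs
    linear_combination ((6 * x - 1 + s) / 64) * hs2
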